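/- Let n = 4, let Λ = diag(λ₁,λ₂,λ₃,λ₄) be diagonal and let k : ℝ → Matrix (Fin 4) (Fin 4) ℝ satisfy, for every t, k'(t) = M(k(t)·Λ·k(t)ᵀ)·k(t) and k(t)ᵀ·k(t) = 1. For column indices a,b let m_{ab}(t) = k(t)_{1a}·k(t)_{2b} − k(t)_{1b}·k(t)_{2a} (the 2×2 top minors). If m_{14}(t) ≠ 0 and m_{23}(t) ≠ 0 for all t, then the cross-ratio t ↦ (m_{13}(t)·m_{24}(t))/(m_{14}(t)·m_{23}(t)) is constant along the Toda flow. -/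

import Mathlib

open Matrix

attribute [local instance] Matrix.normedAddCommGroup Matrix.normedSpace

/-- The Toda projection: `M(A)_{ij} = A_{ij}` for `i < j`, `M(A)_{ij} = -A_{ji}` for
`i > j`, and `M(A)_{ii} = 0`. -/
def todaProj {n : ℕ} (A : Matrix (Fin n) (Fin n) ℝ) : Matrix (Fin n) (Fin n) ℝ :=
  Matrix.of fun i j => if i < j then A i j else if j < i then -A j i else 0

/-- The `2×2` minor of `k` on the first two rows and the columns `a`, `b`. -/
def topMinor (k : ℝ → Matrix (Fin 4) (Fin 4) ℝ) (a b : Fin 4) (t : ℝ) : ℝ :=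
  k t 0 a * k t 1 b - k t 0 b * k t 1 a

lemma topMinor_hasDerivAt (lam : Fin 4 → ℝ)
    (k : ℝ → Matrix (Fin 4) (Fin 4) ℝ)
    (hk : ∀ t, HasDerivAt k
      (todaProj (k t * Matrix.diagonal lam * (k t)ᵀ) * k t) t)
    (horth : ∀ t, (k t)ᵀ * k t = 1) (a b : Fin 4) (t : ℝ) :
    HasDerivAt (topMinor k a b)
      ((lam a + lam b - (k t * Matrix.diagonal lam * (k t)ᵀ) 0 0
          - (k t * Matrix.diagonal lam * (k t)ᵀ) 1 1) * topMinor k a b t) t := by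
  set S : Matrix (Fin 4) (Fin 4) ℝ := k t * Matrix.diagonal lam * (k t)ᵀ with hS
  set B : Matrix (Fin 4) (Fin 4) ℝ := todaProj S with hB
  have hent : ∀ i j : Fin 4, HasDerivAt (fun s => k s i j) ((B * k t) i j) t := by
    intro i j
    exact hasDerivAt_pi.mp (hasDerivAt_pi.mp (hk t) i) j
  have hd : HasDerivAt (topMinor k a b)
      (((B * k t) 0 a * k t 1 b + k t 0 a * (B * k t) 1 b)
        - ((B * k t) 0 b * k t 1 a + k t 0 b * (B * k t) 1 a)) t :=
    ((hent 0 a).mul (hent 1 b)).sub ((hent 0 b).mul (hent 1 a))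
  convert hd using 1
  have h1 : S * k t = k t * Matrix.diagonal lam := by
    rw [hS, Matrix.mul_assoc (k t * Matrix.diagonal lam), horth t, Matrix.mul_one]
  have hrel : ∀ (i c : Fin 4),
      S i 0 * k t 0 c + S i 1 * k t 1 c + S i 2 * k t 2 c + S i 3 * k t 3 c
        = lam c * k t i c := by
    intro i c
    have h2 := congrFun (congrFun h1 i) c
    rw [Matrix.mul_apply, Fin.sum_univ_four, Matrix.mul_diagonal] at h2
    linarith [h2]
  have hBe : ∀ i j : Fin 4, B i j = if i < j then S i j else if j < i then -S j i else 0 := by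
    intro i j; rfl
  rw [topMinor]
  simp only [Matrix.mul_apply, Fin.sum_univ_four, hBe]
  simp (config := { decide := true }) only [if_true, if_false]
  linear_combination -(k t 1 b) * hrel 0 a + k t 1 a * hrel 0 b
    - k t 0 a * hrel 1 b + k t 0 b * hrel 1 a

/-- For `SL₄`: the cross-ratio `(m₁₃·m₂₄)/(m₁₄·m₂₃)` of `2×2` top minors of an
orthogonal solution `k(t)` of `k' = M(k·Λ·kᵀ)·k`, `Λ = diag(λ₁,…,λ₄)`, is constant
along the Toda flow (columns `1,2,3,4` are indices `0,1,2,3` of `Fin 4`). -/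
theorem cross_ratio_invariant (lam : Fin 4 → ℝ)
    (k : ℝ → Matrix (Fin 4) (Fin 4) ℝ)
    (hk : ∀ t, HasDerivAt k
      (todaProj (k t * Matrix.diagonal lam * (k t)ᵀ) * k t) t)
    (horth : ∀ t, (k t)ᵀ * k t = 1)
    (h14 : ∀ t, topMinor k 0 3 t ≠ 0) (h23 : ∀ t, topMinor k 1 2 t ≠ 0) :
    ∀ t : ℝ,
      topMinor k 0 2 t * topMinor k 1 3 t / (topMinor k 0 3 t * topMinor k 1 2 t)
        = topMinor k 0 2 0 * topMinor k 1 3 0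
            / (topMinor k 0 3 0 * topMinor k 1 2 0) := by
  have key : ∀ s : ℝ, HasDerivAt (fun u =>
      topMinor k 0 2 u * topMinor k 1 3 u / (topMinor k 0 3 u * topMinor k 1 2 u)) 0 s := by
    intro s
    have d02 := topMinor_hasDerivAt lam k hk horth 0 2 s
    have d13 := topMinor_hasDerivAt lam k hk horth 1 3 s
    have d03 := topMinor_hasDerivAt lam k hk horth 0 3 s
    have d12 := topMinor_hasDerivAt lam k hk horth 1 2 s
    have hne : topMinor k 0 3 s * topMinor k 1 2 s ≠ 0 :=
      mul_ne_zero (h14 s) (h23 s)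
    have H := (d02.mul d13).div (d03.mul d12) hne
    refine H.congr_deriv ?_
    rw [div_eq_zero_iff]
    left
    simp only [Pi.mul_apply]
    ring
  intro t
  exact is_const_of_deriv_eq_zero (fun s => (key s).differentiableAt)
    (fun s => (key s).deriv) t 0
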